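/- Let E be a Banach space, Π(a,σ) a family of bounded operators on E with ‖Π(a,σ)‖_{L(E₀,E_α)} ≤ M e^{ϖ(a-σ)} (a-σ)^{-α} for 0 ≤ σ ≤ a, where 0 ≤ α < 1. For v ∈ C([0,T], L¹(J,E₀)) define G_v(t,a) = ∫_{(t-a)₊}^{t} Π(a, a-t+s) v(s, a-t+s) ds. Then ‖G_v(t,·)‖_{L¹(J,E_α)} ≤ c(T) ∫₀^t (t-s)^{-α} ‖v(s)‖_{L¹(J,E₀)} ds for t ∈ [0,T], for some constant c(T) > 0. -/

import Mathlib

open MeasureTheory Set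

section Aux

variable {E₀ Eα : Type*} [NormedAddCommGroup E₀] [NormedSpace ℝ E₀]
    [NormedAddCommGroup Eα] [NormedSpace ℝ Eα] [CompleteSpace Eα]

/-- helper: antitonicity of `x ↦ x ^ (-α)` for `0 ≤ α`. -/
lemma stmt9_rpow_anti {α x y : ℝ} (hα0 : 0 ≤ α) (hy : 0 < y) (hxy : y ≤ x) :
    x ^ (-α) ≤ y ^ (-α) :=
  Real.rpow_le_rpow_of_nonpos hy hxy (neg_nonpos.mpr hα0)

/-- Continuity of the integrand on the open region `W`. -/
lemma stmt9_contOn {α M ϖ t : ℝ} (hα0 : 0 ≤ α) (hM0 : 0 ≤ M)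
    (P : ℝ → ℝ → (E₀ →L[ℝ] Eα))
    (hP : ∀ σ a : ℝ, 0 ≤ σ → σ < a → ‖P a σ‖ ≤ M * Real.exp (ϖ * (a - σ)) * (a - σ) ^ (-α))
    (hPc : ∀ x : E₀, Continuous fun p : ℝ × ℝ => P p.1 p.2 x)
    (v : ℝ → ℝ → E₀) (hv : Continuous (Function.uncurry v)) :
    ContinuousOn (fun p : ℝ × ℝ => P p.1 (p.1 - t + p.2) (v p.2 (p.1 - t + p.2)))
      {p : ℝ × ℝ | max (t - p.1) 0 < p.2 ∧ p.2 < t} := by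
  set W : Set (ℝ × ℝ) := {p : ℝ × ℝ | max (t - p.1) 0 < p.2 ∧ p.2 < t} with hW
  have hvΦ : Continuous fun p : ℝ × ℝ => v p.2 (p.1 - t + p.2) :=
    hv.comp (continuous_snd.prodMk ((continuous_fst.sub continuous_const).add continuous_snd))
  intro p₀ hp₀
  obtain ⟨h1, h2⟩ := hp₀
  have hδ : 0 < (t - p₀.2) / 2 := by linarith
  set δ : ℝ := (t - p₀.2) / 2 with hδdef
  set K : ℝ := M * Real.exp (|ϖ| * (|t| + |p₀.2| + 1)) * δ ^ (-α) with hK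
  set x₀ : E₀ := v p₀.2 (p₀.1 - t + p₀.2) with hx₀
  have hA : ContinuousWithinAt (fun p : ℝ × ℝ => P p.1 (p.1 - t + p.2) x₀) W p₀ :=
    ((hPc x₀).comp
      (continuous_fst.prodMk
        ((continuous_fst.sub continuous_const).add continuous_snd))).continuousWithinAt
  have hxc : ContinuousWithinAt (fun p : ℝ × ℝ => v p.2 (p.1 - t + p.2)) W p₀ :=
    hvΦ.continuousWithinAt
  -- the remainder term tends to zero
  have hev1 : ∀ᶠ p : ℝ × ℝ in nhdsWithin p₀ W, p.2 < t - δ := by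
    apply eventually_nhdsWithin_of_eventually_nhds
    have hopen : IsOpen {p : ℝ × ℝ | p.2 < t - δ} :=
      isOpen_lt continuous_snd continuous_const
    exact hopen.eventually_mem (by simp only [mem_setOf_eq]; linarith)
  have hev2 : ∀ᶠ p : ℝ × ℝ in nhdsWithin p₀ W, |p.2| < |p₀.2| + 1 := by
    apply eventually_nhdsWithin_of_eventually_nhds
    have hopen : IsOpen {p : ℝ × ℝ | |p.2| < |p₀.2| + 1} :=
      isOpen_lt (continuous_snd.abs) continuous_const
    exact hopen.eventually_mem (by simp only [mem_setOf_eq]; linarith [abs_nonneg p₀.2])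
  have hbound : ∀ᶠ p in nhdsWithin p₀ W,
      ‖P p.1 (p.1 - t + p.2) (v p.2 (p.1 - t + p.2) - x₀)‖
        ≤ K * ‖v p.2 (p.1 - t + p.2) - x₀‖ := by
    filter_upwards [hev1, hev2, eventually_mem_nhdsWithin] with p hp1 hp2 hpW
    have hw1 : max (t - p.1) 0 < p.2 := hpW.1
    have hw2 : p.2 < t := hpW.2
    have hσ0 : 0 ≤ p.1 - t + p.2 := by
      have := lt_of_le_of_lt (le_max_left (t - p.1) 0) hw1; linarith
    have hσa : p.1 - t + p.2 < p.1 := by linarith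
    have hop := hP _ _ hσ0 hσa
    have heq : p.1 - (p.1 - t + p.2) = t - p.2 := by ring
    rw [heq] at hop
    have hKb : ‖P p.1 (p.1 - t + p.2)‖ ≤ K := by
      refine hop.trans ?_
      have hexp : Real.exp (ϖ * (t - p.2)) ≤ Real.exp (|ϖ| * (|t| + |p₀.2| + 1)) := by
        apply Real.exp_le_exp.mpr
        calc ϖ * (t - p.2) ≤ |ϖ * (t - p.2)| := le_abs_self _
          _ = |ϖ| * |t - p.2| := abs_mul _ _
          _ ≤ |ϖ| * (|t| + |p.2|) := by
              exact mul_le_mul_of_nonneg_left (abs_sub t p.2) (abs_nonneg ϖ)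
          _ ≤ |ϖ| * (|t| + |p₀.2| + 1) := by
              apply mul_le_mul_of_nonneg_left _ (abs_nonneg ϖ)
              linarith
      have hrp : (t - p.2) ^ (-α) ≤ δ ^ (-α) :=
        stmt9_rpow_anti hα0 hδ (by linarith)
      calc M * Real.exp (ϖ * (t - p.2)) * (t - p.2) ^ (-α)
          ≤ M * Real.exp (|ϖ| * (|t| + |p₀.2| + 1)) * (t - p.2) ^ (-α) := by
            apply mul_le_mul_of_nonneg_right (mul_le_mul_of_nonneg_left hexp hM0)
            exact Real.rpow_nonneg (by linarith) _
        _ ≤ K := by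
            rw [hK]
            apply mul_le_mul_of_nonneg_left hrp
            positivity
    calc ‖P p.1 (p.1 - t + p.2) (v p.2 (p.1 - t + p.2) - x₀)‖
        ≤ ‖P p.1 (p.1 - t + p.2)‖ * ‖v p.2 (p.1 - t + p.2) - x₀‖ :=
          ContinuousLinearMap.le_opNorm _ _
      _ ≤ K * ‖v p.2 (p.1 - t + p.2) - x₀‖ :=
          mul_le_mul_of_nonneg_right hKb (norm_nonneg _)
  have hrem : Filter.Tendsto
      (fun p : ℝ × ℝ => P p.1 (p.1 - t + p.2) (v p.2 (p.1 - t + p.2) - x₀))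
      (nhdsWithin p₀ W) (nhds 0) := by
    apply squeeze_zero_norm' hbound
    have h1 : Filter.Tendsto (fun p : ℝ × ℝ => v p.2 (p.1 - t + p.2) - x₀)
        (nhdsWithin p₀ W) (nhds (x₀ - x₀)) := hxc.sub tendsto_const_nhds
    rw [sub_self] at h1
    have h2 := (h1.norm).const_mul K
    simpa using h2
  have hsum := Filter.Tendsto.add hA hrem
  rw [add_zero] at hsum
  have heqf : (fun p : ℝ × ℝ => P p.1 (p.1 - t + p.2) x₀
      + P p.1 (p.1 - t + p.2) (v p.2 (p.1 - t + p.2) - x₀))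
      = fun p : ℝ × ℝ => P p.1 (p.1 - t + p.2) (v p.2 (p.1 - t + p.2)) := by
    funext p
    rw [map_sub]
    abel
  rw [heqf] at hsum
  exact hsum

end Aux

/-- Estimate for `G_v(t,a) = ∫_{(t-a)₊}^t Π(a,a-t+s) v(s,a-t+s) ds` in the
`L¹(J,E_α)`-norm: `‖G_v(t,·)‖ ≤ c(T) ∫₀^t (t-s)^{-α} ‖v(s)‖_{L¹(J,E₀)} ds`. -/
theorem stmt9 {E₀ Eα : Type*} [NormedAddCommGroup E₀] [NormedSpace ℝ E₀]
    [NormedAddCommGroup Eα] [NormedSpace ℝ Eα] [CompleteSpace Eα]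
    (α M ϖ am T : ℝ) (hα0 : 0 ≤ α) (hα1 : α < 1) (hM : 0 < M) (ham : 0 < am)
    (hT : 0 < T)
    (P : ℝ → ℝ → (E₀ →L[ℝ] Eα))
    (hP : ∀ σ a : ℝ, 0 ≤ σ → σ < a → ‖P a σ‖ ≤ M * Real.exp (ϖ * (a - σ)) * (a - σ) ^ (-α))
    (hPc : ∀ x : E₀, Continuous fun p : ℝ × ℝ => P p.1 p.2 x)
    (v : ℝ → ℝ → E₀) (hv : Continuous (Function.uncurry v)) :
    ∃ c > 0, ∀ t ∈ Icc (0:ℝ) T,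
      (∫ a in (0:ℝ)..am, ‖∫ s in (max (t - a) 0)..t, P a (a - t + s) (v s (a - t + s))‖)
        ≤ c * ∫ s in (0:ℝ)..t, (t - s) ^ (-α) * ∫ a in (0:ℝ)..am, ‖v s a‖ := by
  classical
  -- a uniform bound for `v` on the relevant compact set
  obtain ⟨B₀, hB₀⟩ := (isCompact_Icc.prod isCompact_Icc).exists_bound_of_continuousOn
    (hv.continuousOn (s := Icc (0:ℝ) T ×ˢ Icc (0:ℝ) am))
  set B : ℝ := max B₀ 0 with hBdef
  have hB0 : 0 ≤ B := le_max_right _ _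
  have hB : ∀ s ∈ Icc (0:ℝ) T, ∀ b ∈ Icc (0:ℝ) am, ‖v s b‖ ≤ B := fun s hs b hb =>
    (hB₀ (s, b) ⟨hs, hb⟩).trans (le_max_left _ _)
  set c : ℝ := M * Real.exp (|ϖ| * T) with hcdef
  have hc0 : 0 < c := mul_pos hM (Real.exp_pos _)
  refine ⟨c, hc0, ?_⟩
  intro t ht
  obtain ⟨ht0, htT⟩ := ht
  -- notation
  set W : Set (ℝ × ℝ) := {p : ℝ × ℝ | max (t - p.1) 0 < p.2 ∧ p.2 < t} with hWdef
  have hWopen : IsOpen W := by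
    rw [hWdef, setOf_and]
    exact (isOpen_lt ((continuous_const.sub continuous_fst).max continuous_const)
      continuous_snd).inter (isOpen_lt continuous_snd continuous_const)
  set Φ : ℝ × ℝ → Eα := fun p => P p.1 (p.1 - t + p.2) (v p.2 (p.1 - t + p.2)) with hΦdef
  have hΦc : ContinuousOn Φ W := stmt9_contOn hα0 hM.le P hP hPc v hv
  set F : ℝ × ℝ → Eα := fun p => W.indicator Φ p with hFdef
  have hFm : AEStronglyMeasurable F (volume : Measure (ℝ × ℝ)) :=
    (aestronglyMeasurable_indicator_iff hWopen.measurableSet).mpr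
      (hΦc.aestronglyMeasurable hWopen.measurableSet)
  have hFm2 : AEStronglyMeasurable F ((volume : Measure ℝ).prod (volume : Measure ℝ)) := by
    rwa [← Measure.volume_eq_prod]
  have hg : AEStronglyMeasurable (fun a => ∫ s, F (a, s)) (volume : Measure ℝ) :=
    hFm2.integral_prod_right'
  -- rewrite the left-hand side
  have hLHS : (∫ a in (0:ℝ)..am, ‖∫ s in (max (t - a) 0)..t, P a (a - t + s) (v s (a - t + s))‖)
      = ∫ a in Ioc (0:ℝ) am, ‖∫ s, F (a, s)‖ := by
    rw [intervalIntegral.integral_of_le ham.le]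
    refine setIntegral_congr_fun measurableSet_Ioc (fun a ha => ?_)
    congr 1
    have hmle : max (t - a) 0 ≤ t := max_le (by linarith [ha.1]) ht0
    rw [intervalIntegral.integral_of_le hmle, integral_Ioc_eq_integral_Ioo,
      ← integral_indicator measurableSet_Ioo]
    apply integral_congr_ae
    refine Filter.Eventually.of_forall fun s => ?_
    show (Ioo (max (t - a) 0) t).indicator (fun s => P a (a - t + s) (v s (a - t + s))) s
      = W.indicator Φ (a, s)
    simp only [Set.indicator_apply]
    by_cases hmem : (a, s) ∈ W
    · rw [if_pos hmem, if_pos (show s ∈ Ioo (max (t - a) 0) t from hmem)]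
    · rw [if_neg hmem, if_neg (show s ∉ Ioo (max (t - a) 0) t from hmem)]
  -- the dominating kernel
  set ρ : ℝ × ℝ → ℝ := fun q => c * (t - q.2) ^ (-α) * ‖v q.2 (q.1 - t + q.2)‖ with hρdef
  set ψ : ℝ × ℝ → ENNReal := fun p => ENNReal.ofReal (W.indicator ρ p) with hψdef
  have hρc : ContinuousOn ρ W := by
    apply ContinuousOn.mul
    apply ContinuousOn.mul continuousOn_const
    · intro q hq
      have hq2 : q.2 < t := hq.2
      have hne : t - q.2 ≠ 0 := by intro h; rw [sub_eq_zero] at h; exact absurd h.symm (ne_of_lt hq2)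
      have hca2 : ContinuousAt (fun q : ℝ × ℝ => t - q.2) q :=
        (continuous_const.sub continuous_snd).continuousAt
      exact (hca2.rpow_const (Or.inl hne)).continuousWithinAt
    · exact ((hv.comp (continuous_snd.prodMk
        ((continuous_fst.sub continuous_const).add continuous_snd))).norm).continuousOn
  have hψae : AEMeasurable ψ (((volume : Measure ℝ).restrict (Ioc (0:ℝ) am)).prod
      (volume : Measure ℝ)) := by
    have h1 : AEStronglyMeasurable (W.indicator ρ) (volume : Measure (ℝ × ℝ)) :=
      (aestronglyMeasurable_indicator_iff hWopen.measurableSet).mpr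
        (hρc.aestronglyMeasurable hWopen.measurableSet)
    have h2 : AEMeasurable (W.indicator ρ) (((volume : Measure ℝ).restrict (Ioc (0:ℝ) am)).prod
        (volume : Measure ℝ)) := by
      rw [Measure.restrict_prod_eq_prod_univ, ← Measure.volume_eq_prod]
      exact h1.aemeasurable.restrict
    exact ENNReal.measurable_ofReal.comp_aemeasurable h2
  -- pointwise domination of F by ψ
  have hFψ : ∀ p : ℝ × ℝ, (‖F p‖₊ : ENNReal) ≤ ψ p := by
    intro p
    by_cases hp : p ∈ W
    · rw [hψdef]
      simp only [hFdef, indicator_of_mem hp]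
      refine (ofReal_norm _).symm.trans_le ?_
      apply ENNReal.ofReal_le_ofReal
      obtain ⟨hw1, hw2⟩ := hp
      have hp2pos : 0 < p.2 := lt_of_le_of_lt (le_max_right _ _) hw1
      have hσ0 : 0 ≤ p.1 - t + p.2 := by
        have := lt_of_le_of_lt (le_max_left (t - p.1) 0) hw1; linarith
      have hσa : p.1 - t + p.2 < p.1 := by linarith
      have hop := hP _ _ hσ0 hσa
      have heq : p.1 - (p.1 - t + p.2) = t - p.2 := by ring
      rw [heq] at hop
      have h0tp : 0 ≤ t - p.2 := by linarith
      have hexp : Real.exp (ϖ * (t - p.2)) ≤ Real.exp (|ϖ| * T) := by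
        apply Real.exp_le_exp.mpr
        calc ϖ * (t - p.2) ≤ |ϖ| * (t - p.2) :=
              mul_le_mul_of_nonneg_right (le_abs_self ϖ) h0tp
          _ ≤ |ϖ| * T := mul_le_mul_of_nonneg_left (by linarith) (abs_nonneg ϖ)
      calc ‖Φ p‖ ≤ ‖P p.1 (p.1 - t + p.2)‖ * ‖v p.2 (p.1 - t + p.2)‖ :=
            ContinuousLinearMap.le_opNorm _ _
        _ ≤ (c * (t - p.2) ^ (-α)) * ‖v p.2 (p.1 - t + p.2)‖ := by
            apply mul_le_mul_of_nonneg_right _ (norm_nonneg _)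
            refine hop.trans ?_
            rw [hcdef]
            exact mul_le_mul_of_nonneg_right (mul_le_mul_of_nonneg_left hexp hM.le)
              (Real.rpow_nonneg h0tp _)
        _ = ρ p := by rw [hρdef]
    · rw [hψdef]
      simp [hFdef, indicator_of_notMem hp]
  -- the inner `a`-integral estimate, for every `s`
  set L : ℝ → ENNReal := fun s => ∫⁻ b in Ioc (0:ℝ) am, ENNReal.ofReal ‖v s b‖ with hLdef
  have hinner : ∀ s : ℝ, (∫⁻ a in Ioc (0:ℝ) am, ψ (a, s))
      ≤ (Ioo (0:ℝ) t).indicator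
          (fun s => ENNReal.ofReal (c * (t - s) ^ (-α)) * L s) s := by
    intro s
    by_cases hs : s ∈ Ioo (0:ℝ) t
    · obtain ⟨hs0, hst⟩ := hs
      rw [indicator_of_mem (mem_Ioo.mpr ⟨hs0, hst⟩)]
      have hset : ∀ a : ℝ, ψ (a, s) = (Ioi (t - s)).indicator
          (fun a => ENNReal.ofReal (c * (t - s) ^ (-α) * ‖v s (a - t + s)‖)) a := by
        intro a
        by_cases h : t - s < a
        · have hmem : (a, s) ∈ W := ⟨max_lt (by linarith) hs0, hst⟩
          rw [hψdef]
          simp only [indicator_of_mem hmem, indicator_of_mem (mem_Ioi.mpr h), hρdef]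
        · have hmem : (a, s) ∉ W := by
            intro hc
            have := lt_of_le_of_lt (le_max_left (t - a) 0) hc.1
            exact h (by linarith)
          rw [hψdef]
          simp only [indicator_of_notMem hmem,
            indicator_of_notMem (fun hh => h (mem_Ioi.mp hh)), ENNReal.ofReal_zero]
      calc (∫⁻ a in Ioc (0:ℝ) am, ψ (a, s))
          = ∫⁻ a in Ioc (0:ℝ) am, (Ioi (t - s)).indicator
              (fun a => ENNReal.ofReal (c * (t - s) ^ (-α) * ‖v s (a - t + s)‖)) a := by
            simp only [hset]
        _ = ∫⁻ a in Ioi (t - s) ∩ Ioc (0:ℝ) am,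
              ENNReal.ofReal (c * (t - s) ^ (-α) * ‖v s (a - t + s)‖) := by
            rw [lintegral_indicator measurableSet_Ioi,
              Measure.restrict_restrict measurableSet_Ioi]
        _ = ∫⁻ a in Ioc (t - s) am,
              ENNReal.ofReal (c * (t - s) ^ (-α) * ‖v s (a - t + s)‖) := by
            have hseteq : Ioi (t - s) ∩ Ioc (0:ℝ) am = Ioc (t - s) am := by
              ext a
              simp only [mem_inter_iff, mem_Ioi, mem_Ioc]
              constructor
              · rintro ⟨h1, h2, h3⟩; exact ⟨h1, h3⟩
              · rintro ⟨h1, h2⟩; exact ⟨h1, by linarith, h2⟩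
            rw [hseteq]
        _ = ∫⁻ a in Ioc (t - s) am,
              ENNReal.ofReal (c * (t - s) ^ (-α)) * ENNReal.ofReal ‖v s (a - t + s)‖ := by
            refine setLIntegral_congr_fun measurableSet_Ioc (
              fun a ha => ?_)
            rw [ENNReal.ofReal_mul (mul_nonneg hc0.le (Real.rpow_nonneg (by linarith) _))]
        _ = ENNReal.ofReal (c * (t - s) ^ (-α)) *
              ∫⁻ a in Ioc (t - s) am, ENNReal.ofReal ‖v s (a - t + s)‖ :=
            lintegral_const_mul' _ _ ENNReal.ofReal_ne_top
        _ ≤ ENNReal.ofReal (c * (t - s) ^ (-α)) * L s := by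
            apply mul_le_mul_right
            have htrans : (∫⁻ a in Ioc (t - s) am, ENNReal.ofReal ‖v s (a - t + s)‖)
                = ∫⁻ b in Ioc (0:ℝ) (am - (t - s)), ENNReal.ofReal ‖v s b‖ := by
              have hmp := measurePreserving_add_right (volume : Measure ℝ) (t - s)
              have hemb : MeasurableEmbedding (fun x : ℝ => x + (t - s)) :=
                measurableEmbedding_addRight (t - s)
              have hkey := hmp.setLIntegral_comp_preimage_emb hemb
                (fun a => ENNReal.ofReal ‖v s (a - t + s)‖) (Ioc (t - s) am)
              rw [← hkey]
              have hpre : (fun x : ℝ => x + (t - s)) ⁻¹' Ioc (t - s) am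
                  = Ioc (0:ℝ) (am - (t - s)) := by
                ext x
                simp only [mem_preimage, mem_Ioc]
                constructor
                · rintro ⟨h1, h2⟩; exact ⟨by linarith, by linarith⟩
                · rintro ⟨h1, h2⟩; exact ⟨by linarith, by linarith⟩
              rw [hpre]
              refine setLIntegral_congr_fun measurableSet_Ioc (
                fun b hb => ?_)
              have harg : b + (t - s) - t + s = b := by ring
              rw [harg]
            rw [htrans, hLdef]
            exact lintegral_mono_set (Ioc_subset_Ioc_right (by linarith))
    · have hzero : ∀ a : ℝ, ψ (a, s) = 0 := by
        intro a
        have hnm : (a, s) ∉ W := by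
          intro hm
          exact hs (mem_Ioo.mpr ⟨lt_of_le_of_lt (le_max_right _ _) hm.1, hm.2⟩)
        rw [hψdef]
        simp [indicator_of_notMem hnm]
      simp only [hzero, lintegral_zero]
      exact zero_le
  -- the `L¹`-norm of `v s` in Bochner form
  set V : ℝ → ℝ := fun s => ∫ b in Ioc (0:ℝ) am, ‖v s b‖ with hVdef
  have hvs : ∀ s : ℝ, Continuous fun b => v s b := fun s =>
    hv.comp (continuous_const.prodMk continuous_id)
  have hVint0 : ∀ s : ℝ, IntegrableOn (fun b => ‖v s b‖) (Ioc (0:ℝ) am) volume := fun s =>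
    ((hvs s).norm).integrableOn_Ioc
  have hLV : ∀ s : ℝ, L s = ENNReal.ofReal (V s) := fun s =>
    (ofReal_integral_eq_lintegral_ofReal (hVint0 s)
      (Filter.Eventually.of_forall fun b => norm_nonneg _)).symm
  have hV0 : ∀ s : ℝ, 0 ≤ V s := fun s =>
    setIntegral_nonneg measurableSet_Ioc fun b _ => norm_nonneg _
  have hVle : ∀ s ∈ Icc (0:ℝ) T, V s ≤ B * am := by
    intro s hs
    have h1 : ‖∫ b in Ioc (0:ℝ) am, ‖v s b‖‖ ≤ B * (volume (Ioc (0:ℝ) am)).toReal := by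
      refine (fun hC hs => norm_setIntegral_le_of_norm_le_const hs hC) ?_ ?_
      · intro b hb
        rw [norm_norm]
        exact hB s hs b ⟨hb.1.le, hb.2⟩
      · rw [Real.volume_Ioc]
        exact ENNReal.ofReal_lt_top
    rw [Real.volume_Ioc, ENNReal.toReal_ofReal (by linarith)] at h1
    calc V s ≤ ‖V s‖ := le_abs_self _
      _ ≤ B * (am - 0) := h1
      _ = B * am := by ring
  -- measurability of V
  have hVm : AEStronglyMeasurable V (volume : Measure ℝ) := by
    have hH : AEStronglyMeasurable
        (fun p : ℝ × ℝ => (univ ×ˢ Ioc (0:ℝ) am).indicator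
          (fun q : ℝ × ℝ => ‖v q.1 q.2‖) p) ((volume : Measure ℝ).prod (volume : Measure ℝ)) := by
      rw [← Measure.volume_eq_prod]
      exact ((hv.norm.stronglyMeasurable).indicator
        (MeasurableSet.univ.prod measurableSet_Ioc)).aestronglyMeasurable
    have := hH.integral_prod_right'
    refine this.congr (Filter.Eventually.of_forall fun s => ?_)
    show (∫ b, (univ ×ˢ Ioc (0:ℝ) am).indicator (fun q : ℝ × ℝ => ‖v q.1 q.2‖) (s, b))
      = ∫ b in Ioc (0:ℝ) am, ‖v s b‖
    rw [← integral_indicator measurableSet_Ioc]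
    apply integral_congr_ae
    refine Filter.Eventually.of_forall fun b => ?_
    show (univ ×ˢ Ioc (0:ℝ) am).indicator (fun q : ℝ × ℝ => ‖v q.1 q.2‖) (s, b)
      = (Ioc (0:ℝ) am).indicator (fun b => ‖v s b‖) b
    simp only [Set.indicator_apply]
    by_cases hb : b ∈ Ioc (0:ℝ) am
    · rw [if_pos hb, if_pos (show (s, b) ∈ univ ×ˢ Ioc (0:ℝ) am from ⟨mem_univ s, hb⟩)]
    · rw [if_neg hb, if_neg (show (s, b) ∉ univ ×ˢ Ioc (0:ℝ) am from fun hc => hb hc.2)]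
  -- integrability of the weight on (0, t)
  have hwiIoo : IntegrableOn (fun s => (t - s) ^ (-α)) (Ioo (0:ℝ) t) volume := by
    have h1 : IntervalIntegrable (fun x : ℝ => x ^ (-α)) volume 0 t :=
      intervalIntegral.intervalIntegrable_rpow' (by linarith)
    have h2 := h1.comp_sub_left t
    simp only [sub_zero, sub_self] at h2
    exact ((intervalIntegrable_iff_integrableOn_Ioc_of_le ht0).mp h2.symm).mono_set
      Ioo_subset_Ioc_self
  have hwmIoo : AEStronglyMeasurable (fun s => (t - s) ^ (-α))
      ((volume : Measure ℝ).restrict (Ioo (0:ℝ) t)) := hwiIoo.aestronglyMeasurable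
  -- integrability of the full right-hand side integrand
  have hVint : IntegrableOn (fun s => c * (t - s) ^ (-α) * V s) (Ioo (0:ℝ) t) volume := by
    apply Integrable.mono' (hwiIoo.const_mul (c * (B * am)))
    · exact ((aestronglyMeasurable_const.mul hwmIoo).mul (hVm.restrict))
    · filter_upwards [ae_restrict_mem measurableSet_Ioo] with s hs
      have hw0 : 0 ≤ (t - s) ^ (-α) := Real.rpow_nonneg (by linarith [hs.2]) _
      rw [Real.norm_eq_abs, abs_of_nonneg (by positivity)]
      calc c * (t - s) ^ (-α) * V s ≤ c * (t - s) ^ (-α) * (B * am) := by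
            apply mul_le_mul_of_nonneg_left _ (by positivity)
            exact hVle s ⟨hs.1.le, by linarith [hs.2]⟩
        _ = c * (B * am) * (t - s) ^ (-α) := by ring
  -- main chain of inequalities in ℝ≥0∞
  have hchain : (∫⁻ a in Ioc (0:ℝ) am, ENNReal.ofReal ‖∫ s, F (a, s)‖)
      ≤ ENNReal.ofReal (∫ s in Ioo (0:ℝ) t, c * (t - s) ^ (-α) * V s) := by
    calc (∫⁻ a in Ioc (0:ℝ) am, ENNReal.ofReal ‖∫ s, F (a, s)‖)
        ≤ ∫⁻ a in Ioc (0:ℝ) am, ∫⁻ s, ψ (a, s) := by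
          apply lintegral_mono
          intro a
          calc ENNReal.ofReal ‖∫ s, F (a, s)‖
              = (‖∫ s, F (a, s)‖₊ : ENNReal) := ofReal_norm _
            _ ≤ ∫⁻ s, (‖F (a, s)‖₊ : ENNReal) := enorm_integral_le_lintegral_enorm _
            _ ≤ ∫⁻ s, ψ (a, s) := lintegral_mono fun s => hFψ (a, s)
      _ = ∫⁻ s, ∫⁻ a in Ioc (0:ℝ) am, ψ (a, s) := lintegral_lintegral_swap hψae
      _ ≤ ∫⁻ s, (Ioo (0:ℝ) t).indicator
            (fun s => ENNReal.ofReal (c * (t - s) ^ (-α)) * L s) s := lintegral_mono hinner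
      _ = ∫⁻ s in Ioo (0:ℝ) t, ENNReal.ofReal (c * (t - s) ^ (-α)) * L s :=
          lintegral_indicator measurableSet_Ioo _
      _ = ∫⁻ s in Ioo (0:ℝ) t, ENNReal.ofReal (c * (t - s) ^ (-α) * V s) := by
          refine setLIntegral_congr_fun measurableSet_Ioo (
            fun s hs => ?_)
          rw [hLV s, ← ENNReal.ofReal_mul]
          have : 0 ≤ (t - s) ^ (-α) := Real.rpow_nonneg (by linarith [hs.2]) _
          positivity
      _ = ENNReal.ofReal (∫ s in Ioo (0:ℝ) t, c * (t - s) ^ (-α) * V s) := by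
          rw [ofReal_integral_eq_lintegral_ofReal hVint]
          filter_upwards [ae_restrict_mem measurableSet_Ioo] with s hs
          have : 0 ≤ (t - s) ^ (-α) := Real.rpow_nonneg (by linarith [hs.2]) _
          positivity
  -- conclude
  rw [hLHS, integral_eq_lintegral_of_nonneg_ae
    (Filter.Eventually.of_forall fun a => norm_nonneg _) (hg.norm.restrict)]
  have hRHSnn : 0 ≤ ∫ s in Ioo (0:ℝ) t, c * (t - s) ^ (-α) * V s := by
    apply setIntegral_nonneg measurableSet_Ioo
    intro s hs
    have : 0 ≤ (t - s) ^ (-α) := Real.rpow_nonneg (by linarith [hs.2]) _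
    positivity
  calc (∫⁻ a in Ioc (0:ℝ) am, ENNReal.ofReal ‖∫ s, F (a, s)‖).toReal
      ≤ (ENNReal.ofReal (∫ s in Ioo (0:ℝ) t, c * (t - s) ^ (-α) * V s)).toReal :=
        ENNReal.toReal_mono ENNReal.ofReal_ne_top hchain
    _ = ∫ s in Ioo (0:ℝ) t, c * (t - s) ^ (-α) * V s := ENNReal.toReal_ofReal hRHSnn
    _ = c * ∫ s in (0:ℝ)..t, (t - s) ^ (-α) * ∫ a in (0:ℝ)..am, ‖v s a‖ := by
        rw [intervalIntegral.integral_of_le ht0, integral_Ioc_eq_integral_Ioo,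
          ← integral_const_mul]
        refine setIntegral_congr_fun measurableSet_Ioo (fun s hs => ?_)
        rw [intervalIntegral.integral_of_le ham.le]
        rw [hVdef]
        ring
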